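/- Lipschitz dependence of the smoothed function on the smoothing parameter (Technical Lemma D). Let F : ℝ^d → ℝ be L_F-Lipschitz. Then for every x ∈ ℝ^d and all μ₁, μ₂ > 0, |F_{μ₁}(x) − F_{μ₂}(x)| ≤ L_F·√d·|μ₁ − μ₂|, where F_μ(x) := ∫ F(x + μ·u) dγ(u). -/

import Mathlib

open MeasureTheory ProbabilityTheory Real Filter Set
open scoped NNReal ENNReal

/-- The standard Gaussian measure on `EuclideanSpace ℝ (Fin d)`, i.e. the `d`-fold
product of the standard Gaussian measure `N(0,1)` on `ℝ`. -/
noncomputable def stdGaussian (d : ℕ) : Measure (EuclideanSpace ℝ (Fin d)) :=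
  (Measure.pi fun _ : Fin d => gaussianReal 0 1).map
    (MeasurableEquiv.toLp 2 (Fin d → ℝ))

namespace SmoothedAux

lemma tendsto_aux : Tendsto (fun x : ℝ => -x * Real.exp (-(1/2) * x^2)) atTop (nhds 0) := by
  have h := rpow_mul_exp_neg_mul_sq_isLittleO_exp_neg (b := 1/2) one_half_pos (1 : ℝ)
  have h2 : Tendsto (fun x : ℝ => Real.exp (-(1/2) * x)) atTop (nhds 0) := by
    have := Real.tendsto_exp_neg_atTop_nhds_zero.comp (tendsto_id.atTop_div_const two_pos)
    refine this.congr fun x => ?_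
    simp only [Function.comp_apply, id_eq]
    ring_nf
  have h3 : Tendsto (fun x : ℝ => x ^ (1:ℝ) * Real.exp (-(1/2) * x^2)) atTop (nhds 0) :=
    h.trans_tendsto h2
  have h4 : Tendsto (fun x : ℝ => x * Real.exp (-(1/2) * x^2)) atTop (nhds 0) := by
    refine h3.congr' ?_
    filter_upwards [eventually_gt_atTop (0:ℝ)] with x hx
    rw [Real.rpow_one]
  simpa using h4.neg

lemma integrable_sq_mul_exp : Integrable (fun x : ℝ => x^2 * Real.exp (-(1/2) * x^2)) := by
  have := integrable_rpow_mul_exp_neg_mul_sq (b := 1/2) one_half_pos (s := 2) (by norm_num)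
  refine this.congr ?_
  filter_upwards with x
  rw [show ((2:ℝ)) = ((2:ℕ):ℝ) by norm_num, Real.rpow_natCast]

lemma integral_Ioi_eq : ∫ x in Ioi (0:ℝ), x^2 * Real.exp (-(1/2) * x^2)
    = ∫ x in Ioi (0:ℝ), Real.exp (-(1/2) * x^2) := by
  have hderiv : ∀ x ∈ Ioi (0:ℝ), HasDerivAt (fun x : ℝ => -x * Real.exp (-(1/2) * x^2))
      (x^2 * Real.exp (-(1/2) * x^2) - Real.exp (-(1/2) * x^2)) x := by
    intro x _
    have h1 : HasDerivAt (fun x : ℝ => -(1/2) * x^2) (-(1/2) * (2 * x^1)) x :=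
      (hasDerivAt_pow 2 x).const_mul (-(1/2))
    have h2 := h1.exp
    have h3 := ((hasDerivAt_id x).neg).mul h2
    refine HasDerivAt.congr_deriv h3 ?_
    simp only [Pi.neg_apply, id_eq]
    ring
  have hint : IntegrableOn (fun x : ℝ => x^2 * Real.exp (-(1/2) * x^2) - Real.exp (-(1/2) * x^2)) (Ioi 0) :=
    (integrable_sq_mul_exp.sub (integrable_exp_neg_mul_sq one_half_pos)).integrableOn
  have hcont : ContinuousWithinAt (fun x : ℝ => -x * Real.exp (-(1/2) * x^2)) (Ici 0) 0 :=
    (Continuous.continuousWithinAt (by continuity))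
  have key := integral_Ioi_of_hasDerivAt_of_tendsto hcont hderiv hint tendsto_aux
  rw [integral_sub integrable_sq_mul_exp.integrableOn
      (integrable_exp_neg_mul_sq one_half_pos).integrableOn] at key
  norm_num at key ⊢
  linarith [key]

lemma integral_sq_mul_exp_eq : ∫ x : ℝ, x^2 * Real.exp (-(1/2) * x^2) = Real.sqrt (2 * Real.pi) := by
  have e1 : ∫ x : ℝ, x^2 * Real.exp (-(1/2) * x^2)
      = 2 * ∫ x in Ioi (0:ℝ), x^2 * Real.exp (-(1/2) * x^2) := by
    rw [← integral_comp_abs (f := fun x => x^2 * Real.exp (-(1/2) * x^2))]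
    congr 1 with x
    rw [sq_abs]
  have e2 : ∫ x : ℝ, Real.exp (-(1/2) * x^2)
      = 2 * ∫ x in Ioi (0:ℝ), Real.exp (-(1/2) * x^2) := by
    rw [← integral_comp_abs (f := fun x => Real.exp (-(1/2) * x^2))]
    congr 1 with x
    rw [sq_abs]
  rw [e1, integral_Ioi_eq, ← e2]
  have := integral_gaussian (1/2)
  simp only [neg_mul] at this ⊢
  rw [this]
  rw [show Real.pi / (1/2) = 2 * Real.pi by ring]

lemma pdf_eq (x : ℝ) : gaussianPDFReal 0 1 x = (Real.sqrt (2 * Real.pi))⁻¹ * Real.exp (-(1/2) * x^2) := by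
  unfold gaussianPDFReal
  push_cast
  rw [mul_one, sub_zero]
  ring_nf

lemma gaussian_eq_wd : gaussianReal 0 1
    = (volume : Measure ℝ).withDensity (fun x => ((gaussianPDFReal 0 1 x).toNNReal : ENNReal)) := by
  rw [gaussianReal_of_var_ne_zero 0 one_ne_zero]
  rfl

lemma smul_pdf_eq (x : ℝ) : ((gaussianPDFReal 0 1 x).toNNReal : ℝ≥0) • (x^2 : ℝ)
    = (Real.sqrt (2 * Real.pi))⁻¹ * (x^2 * Real.exp (-(1/2) * x^2)) := by
  rw [NNReal.smul_def, smul_eq_mul, Real.coe_toNNReal _ (gaussianPDFReal_nonneg 0 1 x), pdf_eq]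
  ring

lemma integrable_sq_gaussian : Integrable (fun x : ℝ => x^2) (gaussianReal 0 1) := by
  rw [gaussian_eq_wd]
  rw [integrable_withDensity_iff_integrable_smul ((measurable_gaussianPDFReal 0 1).real_toNNReal)]
  have : (fun x : ℝ => ((gaussianPDFReal 0 1 x).toNNReal : ℝ≥0) • x^2)
      = fun x : ℝ => (Real.sqrt (2 * Real.pi))⁻¹ * (x^2 * Real.exp (-(1/2) * x^2)) := by
    funext x; exact smul_pdf_eq x
  rw [this]
  exact integrable_sq_mul_exp.const_mul _

lemma integral_sq_gaussian : ∫ x : ℝ, x^2 ∂(gaussianReal 0 1) = 1 := by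
  rw [gaussian_eq_wd]
  rw [integral_withDensity_eq_integral_smul ((measurable_gaussianPDFReal 0 1).real_toNNReal) (fun x => x^2)]
  simp only [smul_pdf_eq]
  rw [integral_const_mul, integral_sq_mul_exp_eq]
  rw [inv_mul_cancel₀]
  positivity



lemma pi_map_eval {ι : Type*} [Fintype ι] [DecidableEq ι] {α : ι → Type*} [∀ i, MeasurableSpace (α i)]
    (μ : ∀ i, Measure (α i)) [∀ i, IsProbabilityMeasure (μ i)] (i : ι) :
    (Measure.pi μ).map (Function.eval i) = μ i := by
  ext s hs
  rw [Measure.map_apply (measurable_pi_apply i) hs, Set.eval_preimage, Measure.pi_pi]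
  rw [Finset.prod_eq_single i (fun b _ hb => by simp [Function.update_of_ne hb])
    (fun h => absurd (Finset.mem_univ i) h), Function.update_self]

instance stdGaussian_isProb (d : ℕ) : IsProbabilityMeasure (stdGaussian d) :=
  Measure.isProbabilityMeasure_map (MeasurableEquiv.toLp 2 (Fin d → ℝ)).measurable.aemeasurable

lemma integrable_eval_sq (d : ℕ) (i : Fin d) :
    Integrable (fun y : Fin d → ℝ => (y i)^2) (Measure.pi fun _ : Fin d => gaussianReal 0 1) := by
  have h : Integrable (fun x : ℝ => x^2)
      ((Measure.pi fun _ : Fin d => gaussianReal 0 1).map (Function.eval i)) := by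
    rw [pi_map_eval]; exact integrable_sq_gaussian
  exact (integrable_map_measure (Measurable.aestronglyMeasurable (measurable_id.pow_const 2))
    (measurable_pi_apply i).aemeasurable).mp h

lemma integral_eval_sq (d : ℕ) (i : Fin d) :
    ∫ y, (y i)^2 ∂(Measure.pi fun _ : Fin d => gaussianReal 0 1) = 1 := by
  have := integral_map (μ := Measure.pi fun _ : Fin d => gaussianReal 0 1)
    (φ := Function.eval i) (measurable_pi_apply i).aemeasurable
    (f := fun x : ℝ => x^2) (Measurable.aestronglyMeasurable (measurable_id.pow_const 2))
  rw [pi_map_eval] at this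
  rw [← this, integral_sq_gaussian]

lemma norm_sq_eq (d : ℕ) (u : EuclideanSpace ℝ (Fin d)) : ‖u‖^2 = ∑ i, (u i)^2 := by
  rw [EuclideanSpace.norm_eq, Real.sq_sqrt (Finset.sum_nonneg fun i _ => sq_nonneg _)]
  simp [Real.norm_eq_abs, sq_abs]

lemma integrable_norm_sq (d : ℕ) :
    Integrable (fun u : EuclideanSpace ℝ (Fin d) => ‖u‖^2) (stdGaussian d) := by
  rw [_root_.stdGaussian, integrable_map_equiv]
  have : ((fun u : EuclideanSpace ℝ (Fin d) => ‖u‖^2) ∘ (MeasurableEquiv.toLp 2 (Fin d → ℝ)))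
      = fun y : Fin d → ℝ => ∑ i, (y i)^2 := by
    funext y
    simp [Function.comp, norm_sq_eq]
  rw [this]
  exact integrable_finset_sum _ fun i _ => integrable_eval_sq d i

lemma integral_norm_sq (d : ℕ) :
    ∫ u, ‖u‖^2 ∂(stdGaussian d) = d := by
  rw [_root_.stdGaussian, integral_map_equiv]
  have : (fun y : Fin d → ℝ => ‖(MeasurableEquiv.toLp 2 (Fin d → ℝ)) y‖^2)
      = fun y : Fin d → ℝ => ∑ i, (y i)^2 := by
    funext y
    rw [norm_sq_eq]
    rfl
  rw [show (fun y : Fin d → ℝ => ‖((MeasurableEquiv.toLp 2 (Fin d → ℝ)) y : EuclideanSpace ℝ (Fin d))‖^2) = fun y : Fin d → ℝ => ∑ i, (y i)^2 from this]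
  rw [integral_finset_sum Finset.univ (fun i _ => integrable_eval_sq d i)]
  simp [integral_eval_sq d]

lemma integral_norm_le (d : ℕ) :
    ∫ u, ‖u‖ ∂(stdGaussian d) ≤ Real.sqrt d := by
  have hmem : MemLp (fun u : EuclideanSpace ℝ (Fin d) => ‖u‖) 2 (stdGaussian d) :=
    (memLp_two_iff_integrable_sq continuous_norm.aestronglyMeasurable).mpr (integrable_norm_sq d)
  have hvar := variance_nonneg (fun u : EuclideanSpace ℝ (Fin d) => ‖u‖) (stdGaussian d)
  rw [variance_eq_sub hmem] at hvar
  have h2 : (∫ u, ‖u‖ ∂(stdGaussian d))^2 ≤ (d : ℝ) := by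
    have hd : ∫ u, (‖u‖:ℝ)^2 ∂(stdGaussian d) = d := integral_norm_sq d
    simp only [Pi.pow_apply] at hvar
    linarith [hvar, hd]
  have hnn : 0 ≤ ∫ u, ‖u‖ ∂(stdGaussian d) := integral_nonneg fun u => norm_nonneg u
  exact (Real.le_sqrt hnn (Nat.cast_nonneg d)).mpr h2

lemma integrable_norm_std (d : ℕ) :
    Integrable (fun u : EuclideanSpace ℝ (Fin d) => ‖u‖) (stdGaussian d) :=
  ((memLp_two_iff_integrable_sq continuous_norm.aestronglyMeasurable).mpr
    (integrable_norm_sq d)).integrable one_le_two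



end SmoothedAux

open SmoothedAux Real Filter Set in
/-- Lipschitz dependence of the Gaussian smoothed function on the smoothing
parameter (Technical Lemma D). -/
theorem smoothed_function_lipschitz_in_mu
    (d : ℕ) (hd : 0 < d)
    (F : EuclideanSpace ℝ (Fin d) → ℝ)
    (L_F : ℝ) (hL_F : 0 ≤ L_F) (hFLip : LipschitzWith L_F.toNNReal F)
    (x : EuclideanSpace ℝ (Fin d)) (μ₁ μ₂ : ℝ) (hμ₁ : 0 < μ₁) (hμ₂ : 0 < μ₂) :
    |(∫ u, F (x + μ₁ • u) ∂(stdGaussian d)) - ∫ u, F (x + μ₂ • u) ∂(stdGaussian d)|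
      ≤ L_F * Real.sqrt d * |μ₁ - μ₂| := by
  haveI := stdGaussian_isProb d
  have hLcoe : ((L_F.toNNReal : ℝ≥0) : ℝ) = L_F := Real.coe_toNNReal _ hL_F
  have hnormInt := integrable_norm_std d
  -- Lipschitz pointwise bound between the two shifted functions
  have hpt : ∀ (μ ν : ℝ) (u : EuclideanSpace ℝ (Fin d)),
      |F (x + μ • u) - F (x + ν • u)| ≤ L_F * (|μ - ν| * ‖u‖) := by
    intro μ ν u
    have := hFLip.dist_le_mul (x + μ • u) (x + ν • u)
    rw [Real.dist_eq, hLcoe] at this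
    refine this.trans ?_
    rw [dist_eq_norm]
    have : (x + μ • u) - (x + ν • u) = (μ - ν) • u := by
      rw [add_sub_add_left_eq_sub, ← sub_smul]
    rw [this, norm_smul, Real.norm_eq_abs]
  -- integrability of u ↦ F (x + μ • u)
  have hInt : ∀ μ : ℝ, Integrable (fun u : EuclideanSpace ℝ (Fin d) => F (x + μ • u)) (stdGaussian d) := by
    intro μ
    have hmeas : AEStronglyMeasurable (fun u : EuclideanSpace ℝ (Fin d) => F (x + μ • u)) (stdGaussian d) :=
      (hFLip.continuous.comp (continuous_const.add (continuous_id.const_smul μ))).aestronglyMeasurable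
    refine Integrable.mono' ((integrable_const |F x|).add (hnormInt.const_mul (L_F * |μ|))) hmeas ?_
    filter_upwards with u
    rw [Real.norm_eq_abs]
    have h1 : |F (x + μ • u)| ≤ |F (x + μ • u) - F (x + 0 • u)| + |F (x + 0 • u)| := by
      calc |F (x + μ • u)| = |(F (x + μ • u) - F (x + 0 • u)) + F (x + 0 • u)| := by ring_nf
        _ ≤ _ := abs_add_le _ _
    refine h1.trans ?_
    have h2 := hpt μ 0 u
    simp only [zero_smul, add_zero, sub_zero] at h2
    calc |F (x + μ • u) - F (x + 0 • u)| + |F (x + 0 • u)|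
        ≤ L_F * (|μ| * ‖u‖) + |F x| := by
          simp only [zero_smul, add_zero]
          exact add_le_add h2 le_rfl
      _ = |F x| + L_F * |μ| * ‖u‖ := by ring
  -- main chain
  have hsub : Integrable (fun u : EuclideanSpace ℝ (Fin d) =>
      F (x + μ₁ • u) - F (x + μ₂ • u)) (stdGaussian d) := (hInt μ₁).sub (hInt μ₂)
  calc |(∫ u, F (x + μ₁ • u) ∂(stdGaussian d)) - ∫ u, F (x + μ₂ • u) ∂(stdGaussian d)|
      = |∫ u, (F (x + μ₁ • u) - F (x + μ₂ • u)) ∂(stdGaussian d)| := by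
        rw [integral_sub (hInt μ₁) (hInt μ₂)]
    _ ≤ ∫ u, |F (x + μ₁ • u) - F (x + μ₂ • u)| ∂(stdGaussian d) := by
        simpa [Real.norm_eq_abs] using
          norm_integral_le_integral_norm (fun u : EuclideanSpace ℝ (Fin d) =>
            F (x + μ₁ • u) - F (x + μ₂ • u)) (μ := stdGaussian d)
    _ ≤ ∫ u, L_F * |μ₁ - μ₂| * ‖u‖ ∂(stdGaussian d) := by
        refine integral_mono hsub.abs ((hnormInt.const_mul _)) ?_
        intro u
        have := hpt μ₁ μ₂ u
        calc |F (x + μ₁ • u) - F (x + μ₂ • u)| ≤ L_F * (|μ₁ - μ₂| * ‖u‖) := this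
          _ = L_F * |μ₁ - μ₂| * ‖u‖ := by ring
    _ = L_F * |μ₁ - μ₂| * ∫ u, ‖u‖ ∂(stdGaussian d) := integral_const_mul _ _
    _ ≤ L_F * |μ₁ - μ₂| * Real.sqrt d := by
        refine mul_le_mul_of_nonneg_left (integral_norm_le d) ?_
        positivity
    _ = L_F * Real.sqrt d * |μ₁ - μ₂| := by ring
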